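/- On a non-degenerate triangle T, the nodal basis function of the sBDFM element dual to the functional 'mean over e_i of v·n_i' is φ_{n_i,0} = λ_j(3λ_j−2) t_k/(n_i·t_k) + λ_k(3λ_k−2) t_j/(n_i·t_j) + 6 λ_j λ_k n_i; that is, φ_{n_i,0} ∈ P^{2-}(T), its mean of normal component over e_i equals 1, and all eight other sBDFM nodal functionals vanish on it. -/
import Mathlib


open MeasureTheory
open scoped Classical

noncomputable section

/-- The plane. -/
abbrev V2 : Type := ℝ × ℝ

/-- Euclidean dot product on the plane. -/
def dot2 (u v : V2) : ℝ := u.1 * v.1 + u.2 * v.2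

/-- 2D cross product. -/
def cross2 (u v : V2) : ℝ := u.1 * v.2 - u.2 * v.1

/-- Euclidean norm on the plane. -/
def enorm2 (u : V2) : ℝ := Real.sqrt (u.1 ^ 2 + u.2 ^ 2)

/-- `f` is (the restriction of) a polynomial of total degree at most `k`. -/
def IsPolyDeg (k : ℕ) (f : V2 → ℝ) : Prop :=
  ∃ p : MvPolynomial (Fin 2) ℝ, p.totalDegree ≤ k ∧
    ∀ x : V2, f x = MvPolynomial.eval (fun i : Fin 2 => if i = 0 then x.1 else x.2) p

/-- A vector field whose two components are polynomials of degree at most `k`. -/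
def IsVPolyDeg (k : ℕ) (v : V2 → V2) : Prop :=
  IsPolyDeg k (fun x => (v x).1) ∧ IsPolyDeg k (fun x => (v x).2)

/-- partial derivative in the `x` direction -/
def pd1 (f : V2 → ℝ) (x : V2) : ℝ := fderiv ℝ f x (1, 0)

/-- partial derivative in the `y` direction -/
def pd2 (f : V2 → ℝ) (x : V2) : ℝ := fderiv ℝ f x (0, 1)

/-- `curl` of a scalar function: `(∂w/∂y, -∂w/∂x)`. -/
def curl2 (w : V2 → ℝ) : V2 → V2 := fun x => (pd2 w x, - pd1 w x)

/-- divergence of a planar vector field -/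
def div2 (v : V2 → V2) (x : V2) : ℝ :=
  pd1 (fun y => (v y).1) x + pd2 (fun y => (v y).2) x

/-- Parametrization of the segment from `p` to `q`. -/
def seg (p q : V2) (s : ℝ) : V2 := p + s • (q - p)

/-- A non-degenerate triangle, together with its barycentric coordinates `lam i`,
unit outward normals `nrm i` and unit tangents `tang i` of the edges `e i`
(the edge `e i` being opposite the vertex `a i`, joining `a (i+1)` and `a (i+2)`),
oriented so that `nrm i × tang i > 0`. -/
structure Triangle where
  a : Fin 3 → V2
  indep : AffineIndependent ℝ a
  lam : Fin 3 → V2 → ℝ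
  lam_affine : ∀ i, ∃ (L : V2 →ₗ[ℝ] ℝ) (c : ℝ), ∀ x, lam i x = L x + c
  lam_apply : ∀ i j, lam i (a j) = if i = j then (1 : ℝ) else 0
  nrm : Fin 3 → V2
  tang : Fin 3 → V2
  nrm_unit : ∀ i, enorm2 (nrm i) = 1
  tang_unit : ∀ i, enorm2 (tang i) = 1
  tang_parallel : ∀ i, ∃ c : ℝ, a (i + 2) - a (i + 1) = c • tang i
  nrm_orth : ∀ i, dot2 (nrm i) (tang i) = 0
  nrm_outward : ∀ i, dot2 (nrm i) (a i - a (i + 1)) < 0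
  orient : ∀ i, 0 < cross2 (nrm i) (tang i)

/-- The (closed) triangle as a subset of the plane. -/
def triSet (T : Triangle) : Set V2 := convexHull ℝ (Set.range T.a)

/-- Parametrization of the edge `e i` of `T` (from `a (i+1)` to `a (i+2)`). -/
def epara (T : Triangle) (i : Fin 3) (s : ℝ) : V2 := seg (T.a (i + 1)) (T.a (i + 2)) s

/-- Length of edge `e i`. -/
def elen (T : Triangle) (i : Fin 3) : ℝ := enorm2 (T.a (i + 2) - T.a (i + 1))

/-- Area of the triangle. -/
def areaT (T : Triangle) : ℝ := |cross2 (T.a 1 - T.a 0) (T.a 2 - T.a 0)| / 2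

/-- The normal component of `v` on each edge of `T` is a polynomial of degree at
most one along that edge. -/
def NormalP1 (T : Triangle) (v : V2 → V2) : Prop :=
  ∀ i : Fin 3, ∃ α β : ℝ, ∀ s ∈ Set.Icc (0 : ℝ) 1,
    dot2 (v (epara T i s)) (T.nrm i) = α + β * s

/-- Membership in `P^{2-}(T)`: vector-valued quadratic polynomials whose normal
components on the edges are of degree at most one. -/
def memP2m (T : Triangle) (v : V2 → V2) : Prop := IsVPolyDeg 2 v ∧ NormalP1 T v

/-- sBDFM nodal functional: mean over edge `e i` of `v·n_i`. -/
def fN0 (T : Triangle) (i : Fin 3) (v : V2 → V2) : ℝ :=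
  ∫ s in (0:ℝ)..1, dot2 (v (epara T i s)) (T.nrm i)

/-- sBDFM nodal functional: mean over edge `e i` of `v·n_i (λ_{i+1} − λ_{i+2})`. -/
def fN1 (T : Triangle) (i : Fin 3) (v : V2 → V2) : ℝ :=
  ∫ s in (0:ℝ)..1,
    dot2 (v (epara T i s)) (T.nrm i) *
      (T.lam (i + 1) (epara T i s) - T.lam (i + 2) (epara T i s))

/-- sBDFM nodal functional: mean over edge `e i` of `v·t_i`. -/
def fT0 (T : Triangle) (i : Fin 3) (v : V2 → V2) : ℝ :=
  ∫ s in (0:ℝ)..1, dot2 (v (epara T i s)) (T.tang i)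

/-- The claimed nodal basis function `φ_{n_i,0}` (with `j = i+1`, `k = i+2`). -/
def phiN0 (T : Triangle) (i : Fin 3) : V2 → V2 := fun x =>
  (T.lam (i + 1) x * (3 * T.lam (i + 1) x - 2) / dot2 (T.nrm i) (T.tang (i + 2)))
      • T.tang (i + 2)
  + (T.lam (i + 2) x * (3 * T.lam (i + 2) x - 2) / dot2 (T.nrm i) (T.tang (i + 1)))
      • T.tang (i + 1)
  + (6 * T.lam (i + 1) x * T.lam (i + 2) x) • T.nrm i

-- helpers test
open MvPolynomial in
lemma isPolyDeg_congr {k : ℕ} {f g : V2 → ℝ} (h : ∀ x, f x = g x) (hf : IsPolyDeg k f) :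
    IsPolyDeg k g := by
  obtain ⟨p, hp, he⟩ := hf
  exact ⟨p, hp, fun x => (h x) ▸ he x⟩

open MvPolynomial in
lemma isPolyDeg_const (k : ℕ) (c : ℝ) : IsPolyDeg k (fun _ => c) :=
  ⟨C c, by simp, by simp⟩

open MvPolynomial in
lemma isPolyDeg_affine (a b c : ℝ) : IsPolyDeg 1 (fun x : V2 => a * x.1 + b * x.2 + c) := by
  refine ⟨C a * X 0 + C b * X 1 + C c, ?_, ?_⟩
  · have h1 : (C a * X 0 : MvPolynomial (Fin 2) ℝ).totalDegree ≤ 1 :=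
      le_trans (totalDegree_mul _ _) (by simp [totalDegree_X])
    have h2 : (C b * X 1 : MvPolynomial (Fin 2) ℝ).totalDegree ≤ 1 :=
      le_trans (totalDegree_mul _ _) (by simp [totalDegree_X])
    refine le_trans (totalDegree_add _ _) (max_le (le_trans (totalDegree_add _ _) (max_le h1 h2)) ?_)
    simp
  · intro x; simp

open MvPolynomial in
lemma isPolyDeg_mul {k l : ℕ} {f g : V2 → ℝ} (hf : IsPolyDeg k f) (hg : IsPolyDeg l g) :
    IsPolyDeg (k + l) (fun x => f x * g x) := by
  obtain ⟨p, hp, hpe⟩ := hf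
  obtain ⟨q, hq, hqe⟩ := hg
  exact ⟨p * q, le_trans (totalDegree_mul _ _) (add_le_add hp hq),
    fun x => by simp [hpe x, hqe x]⟩

open MvPolynomial in
lemma isPolyDeg_add {k : ℕ} {f g : V2 → ℝ} (hf : IsPolyDeg k f) (hg : IsPolyDeg k g) :
    IsPolyDeg k (fun x => f x + g x) := by
  obtain ⟨p, hp, hpe⟩ := hf
  obtain ⟨q, hq, hqe⟩ := hg
  exact ⟨p + q, le_trans (totalDegree_add _ _) (max_le hp hq),
    fun x => by simp [hpe x, hqe x]⟩

lemma isPolyDeg_lamc (T : Triangle) (m : Fin 3) (u v : ℝ) :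
    IsPolyDeg 1 (fun x => u * T.lam m x + v) := by
  obtain ⟨L, c, hL⟩ := T.lam_affine m
  apply isPolyDeg_congr (g := fun x => u * T.lam m x + v)
    (f := fun x : V2 => (u * L (1,0)) * x.1 + (u * L (0,1)) * x.2 + (u * c + v))
  · intro x
    have hx : (x : V2) = x.1 • ((1:ℝ),(0:ℝ)) + x.2 • ((0:ℝ),(1:ℝ)) := by
      cases x with | mk x1 x2 => simp [Prod.ext_iff]
    rw [hL, hx, map_add, LinearMap.map_smul, LinearMap.map_smul]
    simp [smul_eq_mul]; ring
  · exact isPolyDeg_affine _ _ _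

lemma isPolyDeg_lam (T : Triangle) (m : Fin 3) : IsPolyDeg 1 (T.lam m) := by
  apply isPolyDeg_congr (f := fun x => 1 * T.lam m x + 0) (by intro x; ring) (isPolyDeg_lamc T m 1 0)
lemma isPolyDeg_combo (T : Triangle) (j k : Fin 3) (C1 C2 C3 : ℝ) :
    IsPolyDeg 2 (fun x =>
      T.lam j x * (3 * T.lam j x - 2) * C1 + T.lam k x * (3 * T.lam k x - 2) * C2 +
        6 * T.lam j x * T.lam k x * C3) := by
  have h1 : IsPolyDeg 2 (fun x => T.lam j x * (3 * T.lam j x - 2) * C1) := by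
    apply isPolyDeg_congr (f := fun x => (T.lam j x * (3 * T.lam j x + (-2))) * C1)
      (fun x => by ring)
    exact isPolyDeg_mul (k := 2) (l := 0)
      (isPolyDeg_mul (isPolyDeg_lam T j) (isPolyDeg_lamc T j 3 (-2))) (isPolyDeg_const 0 C1)
  have h2 : IsPolyDeg 2 (fun x => T.lam k x * (3 * T.lam k x - 2) * C2) := by
    apply isPolyDeg_congr (f := fun x => (T.lam k x * (3 * T.lam k x + (-2))) * C2)
      (fun x => by ring)
    exact isPolyDeg_mul (k := 2) (l := 0)
      (isPolyDeg_mul (isPolyDeg_lam T k) (isPolyDeg_lamc T k 3 (-2))) (isPolyDeg_const 0 C2)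
  have h3 : IsPolyDeg 2 (fun x => 6 * T.lam j x * T.lam k x * C3) := by
    apply isPolyDeg_congr (f := fun x => ((6 * T.lam j x + 0) * T.lam k x) * C3)
      (fun x => by ring)
    exact isPolyDeg_mul (k := 2) (l := 0)
      (isPolyDeg_mul (isPolyDeg_lamc T j 6 0) (isPolyDeg_lam T k)) (isPolyDeg_const 0 C3)
  exact isPolyDeg_add (isPolyDeg_add h1 h2) h3

lemma dot2_comm (u v : V2) : dot2 u v = dot2 v u := by simp [dot2]; ring

lemma dot_phi (T : Triangle) (i : Fin 3) (x : V2) (w : V2) :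
    dot2 (phiN0 T i x) w =
      T.lam (i+1) x * (3 * T.lam (i+1) x - 2) / dot2 (T.nrm i) (T.tang (i+2))
          * dot2 (T.tang (i+2)) w
      + T.lam (i+2) x * (3 * T.lam (i+2) x - 2) / dot2 (T.nrm i) (T.tang (i+1))
          * dot2 (T.tang (i+1)) w
      + 6 * T.lam (i+1) x * T.lam (i+2) x * dot2 (T.nrm i) w := by
  simp only [phiN0, dot2, Prod.fst_add, Prod.snd_add, Prod.smul_fst, Prod.smul_snd,
    smul_eq_mul]
  ring

lemma lam_seg (T : Triangle) (m i : Fin 3) (s : ℝ) :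
    T.lam m (epara T i s) = (1 - s) * T.lam m (T.a (i+1)) + s * T.lam m (T.a (i+2)) := by
  obtain ⟨L, c, hL⟩ := T.lam_affine m
  simp only [epara, seg, hL, map_add, LinearMap.map_smul, map_sub, smul_eq_mul]
  ring
lemma dot2_self_one {n : V2} (h : enorm2 n = 1) : dot2 n n = 1 := by
  have h2 : n.1 ^ 2 + n.2 ^ 2 = 1 := by
    have := Real.sqrt_eq_one.mp h
    exact this
  simpa [dot2, sq] using by nlinarith [h2]

lemma ip (a b c : ℝ) :
    (∫ s in (0:ℝ)..1, (a + b * s + c * s ^ 2)) = a + b / 2 + c / 3 := by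
  have h1 : IntervalIntegrable (fun s : ℝ => a + b * s) MeasureTheory.volume 0 1 :=
    (Continuous.add continuous_const (continuous_const.mul continuous_id)).intervalIntegrable 0 1
  have h2 : IntervalIntegrable (fun s : ℝ => c * s ^ 2) MeasureTheory.volume 0 1 :=
    (continuous_const.mul (continuous_pow 2)).intervalIntegrable 0 1
  have h3 : IntervalIntegrable (fun s : ℝ => (a : ℝ)) MeasureTheory.volume 0 1 :=
    intervalIntegrable_const
  have h4 : IntervalIntegrable (fun s : ℝ => b * s) MeasureTheory.volume 0 1 :=
    (continuous_const.mul continuous_id).intervalIntegrable 0 1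
  rw [show (fun s : ℝ => a + b * s + c * s ^ 2) = fun s : ℝ => (a + b * s) + c * s ^ 2 from rfl]
  rw [_root_.intervalIntegral.integral_add h1 h2, _root_.intervalIntegral.integral_add h3 h4,
    intervalIntegral.integral_const, intervalIntegral.integral_const_mul,
    intervalIntegral.integral_const_mul]
  simp [integral_pow, integral_id]
  ring
lemma cross_zero_of_orth {n u v : V2} (hn : dot2 n n = 1) (hu : dot2 n u = 0)
    (hv : dot2 n v = 0) : cross2 u v = 0 := by
  simp only [dot2] at hn hu hv
  simp only [cross2]
  linear_combination (n.1 * v.2 - n.2 * v.1) * hu + (n.2 * u.1 - n.1 * u.2) * hv +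
    (u.2 * v.1 - u.1 * v.2) * hn

lemma exists_smul_of_cross_zero {u v : V2} (hu : u ≠ 0) (h : cross2 u v = 0) :
    ∃ r : ℝ, v = r • u := by
  simp only [cross2] at h
  have : u.1 ≠ 0 ∨ u.2 ≠ 0 := by
    by_contra hc
    push_neg at hc
    exact hu (Prod.ext hc.1 hc.2)
  rcases this with h1 | h2
  · refine ⟨v.1 / u.1, Prod.ext ?_ ?_⟩
    · simp [Prod.smul_fst, smul_eq_mul]; field_simp
    · simp [Prod.smul_snd, smul_eq_mul]; field_simp; linear_combination h
  · refine ⟨v.2 / u.2, Prod.ext ?_ ?_⟩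
    · simp [Prod.smul_fst, smul_eq_mul]; field_simp; linear_combination -h
    · simp [Prod.smul_snd, smul_eq_mul]; field_simp

lemma ndg (T : Triangle) (i m : Fin 3) (hm : m ≠ i) : dot2 (T.nrm i) (T.tang m) ≠ 0 := by
  intro h0
  have FF : ∀ z : Fin 3, z + 1 ≠ z + 2 ∧ z ≠ z + 1 ∧ z ≠ z + 2 := by decide
  have hni : dot2 (T.nrm i) (T.nrm i) = 1 := dot2_self_one (T.nrm_unit i)
  have hcross : cross2 (T.tang i) (T.tang m) = 0 :=
    cross_zero_of_orth hni (T.nrm_orth i) h0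
  obtain ⟨ci, hci⟩ := T.tang_parallel i
  obtain ⟨cm, hcm⟩ := T.tang_parallel m
  have hcrossu : cross2 (T.a (i+2) - T.a (i+1)) (T.a (m+2) - T.a (m+1)) = 0 := by
    rw [hci, hcm]
    simp only [cross2, Prod.smul_fst, Prod.smul_snd, smul_eq_mul] at hcross ⊢
    linear_combination (ci * cm) * hcross
  -- the edge vector u_i is nonzero
  obtain ⟨L1, c1, hL1⟩ := T.lam_affine (i+1)
  have hune : T.a (i+2) - T.a (i+1) ≠ 0 := by
    intro hz
    have hval : L1 (T.a (i+2) - T.a (i+1)) = -1 := by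
      rw [map_sub]
      have e1 := T.lam_apply (i+1) (i+2)
      have e2 := T.lam_apply (i+1) (i+1)
      rw [if_neg (FF i).1, hL1] at e1
      rw [if_pos rfl, hL1] at e2
      linarith
    rw [hz, map_zero] at hval
    norm_num at hval
  obtain ⟨r, hr⟩ := exists_smul_of_cross_zero hune hcrossu
  obtain ⟨L0, c0, hL0⟩ := T.lam_affine i
  have hLui : L0 (T.a (i+2) - T.a (i+1)) = 0 := by
    rw [map_sub]
    have e1 := T.lam_apply i (i+2)
    have e2 := T.lam_apply i (i+1)
    rw [if_neg (FF i).2.2, hL0] at e1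
    rw [if_neg (FF i).2.1, hL0] at e2
    linarith
  have hLum : L0 (T.a (m+2) - T.a (m+1)) = 0 := by
    rw [hr, LinearMap.map_smul, hLui, smul_eq_mul, mul_zero]
  -- but L0 (u_m) = ±1
  have key : ∀ z z' : Fin 3, z' ≠ z → z = z' + 1 ∨ z = z' + 2 := by decide
  have hcase := key i m hm
  have e1 := T.lam_apply i (m+2)
  have e2 := T.lam_apply i (m+1)
  rw [hL0] at e1 e2
  rw [map_sub] at hLum
  rcases hcase with hc | hc
  · have hne : i ≠ m + 2 := by rw [hc]; exact (FF m).1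
    rw [if_neg hne] at e1
    rw [if_pos hc] at e2
    linarith
  · have hne : i ≠ m + 1 := by rw [hc]; exact fun h => (FF m).1 h.symm
    rw [if_pos hc] at e1
    rw [if_neg hne] at e2
    linarith

/-- `φ_{n_i,0} ∈ P^{2-}(T)`, its mean normal component over `e_i` is `1`,
and all eight other sBDFM nodal functionals vanish on it. -/
theorem stmt8 (T : Triangle) (i : Fin 3) :
    memP2m T (phiN0 T i) ∧
    fN0 T i (phiN0 T i) = 1 ∧ fN1 T i (phiN0 T i) = 0 ∧ fT0 T i (phiN0 T i) = 0 ∧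
    ∀ i' : Fin 3, i' ≠ i →
      fN0 T i' (phiN0 T i) = 0 ∧ fN1 T i' (phiN0 T i) = 0 ∧ fT0 T i' (phiN0 T i) = 0 := by
  have FF : ∀ z : Fin 3, z + 1 ≠ z + 2 ∧ z ≠ z + 1 ∧ z ≠ z + 2 ∧ z + 1 + 1 = z + 2 ∧
      z + 1 + 2 = z ∧ z + 2 + 1 = z ∧ z + 2 + 2 = z + 1 := by decide
  obtain ⟨f12, fi1, fi2, f11, f112, f21, f22⟩ := FF i
  have key : ∀ z z' : Fin 3, z ≠ z' → z = z' + 1 ∨ z = z' + 2 := by decide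
  have d1ne : dot2 (T.nrm i) (T.tang (i+2)) ≠ 0 := ndg T i (i+2) (Ne.symm fi2)
  have d2ne : dot2 (T.nrm i) (T.tang (i+1)) ≠ 0 := ndg T i (i+1) (Ne.symm fi1)
  have hnn : dot2 (T.nrm i) (T.nrm i) = 1 := dot2_self_one (T.nrm_unit i)
  -- barycentric coordinates along the edges
  have lamj_i : ∀ s : ℝ, T.lam (i+1) (epara T i s) = 1 - s := by
    intro s; simp [lam_seg, T.lam_apply, f12]
  have lamk_i : ∀ s : ℝ, T.lam (i+2) (epara T i s) = s := by
    intro s; simp [lam_seg, T.lam_apply, Ne.symm f12]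
  have lamj_j : ∀ s : ℝ, T.lam (i+1) (epara T (i+1) s) = 0 := by
    intro s; simp [lam_seg, f11, f112, T.lam_apply, f12, Ne.symm fi1]
  have lamk_j : ∀ s : ℝ, T.lam (i+2) (epara T (i+1) s) = 1 - s := by
    intro s; simp [lam_seg, f11, f112, T.lam_apply, Ne.symm fi2]
  have lamj_k : ∀ s : ℝ, T.lam (i+1) (epara T (i+2) s) = s := by
    intro s; simp [lam_seg, f21, f22, T.lam_apply, Ne.symm fi1]
  have lamk_k : ∀ s : ℝ, T.lam (i+2) (epara T (i+2) s) = 0 := by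
    intro s; simp [lam_seg, f21, f22, T.lam_apply, Ne.symm fi2, Ne.symm f12]
  -- normal components along edges
  have Ni : ∀ s : ℝ, dot2 (phiN0 T i (epara T i s)) (T.nrm i) = 1 := by
    intro s
    rw [dot_phi, lamj_i, lamk_i, dot2_comm (T.tang (i+2)), dot2_comm (T.tang (i+1)), hnn]
    field_simp
    ring
  have Nj : ∀ s : ℝ, dot2 (phiN0 T i (epara T (i+1) s)) (T.nrm (i+1)) = 0 := by
    intro s
    rw [dot_phi, lamj_j, lamk_j, dot2_comm (T.tang (i+1)) (T.nrm (i+1)), T.nrm_orth (i+1)]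
    ring
  have Nk : ∀ s : ℝ, dot2 (phiN0 T i (epara T (i+2) s)) (T.nrm (i+2)) = 0 := by
    intro s
    rw [dot_phi, lamj_k, lamk_k, dot2_comm (T.tang (i+2)) (T.nrm (i+2)), T.nrm_orth (i+2)]
    ring
  refine ⟨⟨⟨?_, ?_⟩, ?_⟩, ?_, ?_, ?_, ?_⟩
  · -- first component polynomial
    exact isPolyDeg_congr
      (fun x => by
        simp only [phiN0, Prod.fst_add, Prod.smul_fst, smul_eq_mul]; ring)
      (isPolyDeg_combo T (i+1) (i+2)
        ((T.tang (i+2)).1 / dot2 (T.nrm i) (T.tang (i+2)))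
        ((T.tang (i+1)).1 / dot2 (T.nrm i) (T.tang (i+1))) ((T.nrm i).1))
  · -- second component polynomial
    exact isPolyDeg_congr
      (fun x => by
        simp only [phiN0, Prod.snd_add, Prod.smul_snd, smul_eq_mul]; ring)
      (isPolyDeg_combo T (i+1) (i+2)
        ((T.tang (i+2)).2 / dot2 (T.nrm i) (T.tang (i+2)))
        ((T.tang (i+1)).2 / dot2 (T.nrm i) (T.tang (i+1))) ((T.nrm i).2))
  · -- NormalP1
    intro i'
    by_cases hi' : i' = i
    · subst hi'; exact ⟨1, 0, fun s _ => by rw [Ni]; ring⟩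
    · obtain rfl | rfl := key i' i hi'
      · exact ⟨0, 0, fun s _ => by rw [Nj]; ring⟩
      · exact ⟨0, 0, fun s _ => by rw [Nk]; ring⟩
  · -- fN0 i = 1
    simp only [fN0, Ni]
    simp
  · -- fN1 i = 0
    have h : ∀ s : ℝ, dot2 (phiN0 T i (epara T i s)) (T.nrm i) *
        (T.lam (i+1) (epara T i s) - T.lam (i+2) (epara T i s)) = 1 + (-2) * s + 0 * s ^ 2 := by
      intro s; rw [Ni, lamj_i, lamk_i]; ring
    simp only [fN1, h]
    rw [ip]; norm_num
  · -- fT0 i = 0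
    have h : ∀ s : ℝ, dot2 (phiN0 T i (epara T i s)) (T.tang i) =
        dot2 (T.tang (i+2)) (T.tang i) / dot2 (T.nrm i) (T.tang (i+2)) +
        (-(4 * (dot2 (T.tang (i+2)) (T.tang i) / dot2 (T.nrm i) (T.tang (i+2)))) -
          2 * (dot2 (T.tang (i+1)) (T.tang i) / dot2 (T.nrm i) (T.tang (i+1)))) * s +
        (3 * (dot2 (T.tang (i+2)) (T.tang i) / dot2 (T.nrm i) (T.tang (i+2))) +
          3 * (dot2 (T.tang (i+1)) (T.tang i) / dot2 (T.nrm i) (T.tang (i+1)))) * s ^ 2 := by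
      intro s; rw [dot_phi, lamj_i, lamk_i, T.nrm_orth i]; ring
    simp only [fT0, h]
    rw [ip]; ring
  · -- other edges
    intro i' hi'
    obtain rfl | rfl := key i' i hi'
    · refine ⟨?_, ?_, ?_⟩
      · simp only [fN0, Nj]; simp
      · have h : ∀ s : ℝ, dot2 (phiN0 T i (epara T (i+1) s)) (T.nrm (i+1)) *
            (T.lam (i+1+1) (epara T (i+1) s) - T.lam (i+1+2) (epara T (i+1) s)) = 0 := by
          intro s; rw [Nj]; ring
        simp only [fN1, h]; simp
      · have h : ∀ s : ℝ, dot2 (phiN0 T i (epara T (i+1) s)) (T.tang (i+1)) =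
            dot2 (T.tang (i+1)) (T.tang (i+1)) / dot2 (T.nrm i) (T.tang (i+1)) +
            (-(4 * (dot2 (T.tang (i+1)) (T.tang (i+1)) / dot2 (T.nrm i) (T.tang (i+1))))) * s +
            (3 * (dot2 (T.tang (i+1)) (T.tang (i+1)) / dot2 (T.nrm i) (T.tang (i+1)))) * s ^ 2 := by
          intro s; rw [dot_phi, lamj_j, lamk_j]; ring
        simp only [fT0, h]
        rw [ip]; ring
    · refine ⟨?_, ?_, ?_⟩
      · simp only [fN0, Nk]; simp
      · have h : ∀ s : ℝ, dot2 (phiN0 T i (epara T (i+2) s)) (T.nrm (i+2)) *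
            (T.lam (i+2+1) (epara T (i+2) s) - T.lam (i+2+2) (epara T (i+2) s)) = 0 := by
          intro s; rw [Nk]; ring
        simp only [fN1, h]; simp
      · have h : ∀ s : ℝ, dot2 (phiN0 T i (epara T (i+2) s)) (T.tang (i+2)) =
            0 + (-(2 * (dot2 (T.tang (i+2)) (T.tang (i+2)) / dot2 (T.nrm i) (T.tang (i+2))))) * s +
            (3 * (dot2 (T.tang (i+2)) (T.tang (i+2)) / dot2 (T.nrm i) (T.tang (i+2)))) * s ^ 2 := by
          intro s; rw [dot_phi, lamj_k, lamk_k]; ring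
        simp only [fT0, h]
        rw [ip]; ring
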